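/- arXiv:2509.04428 — 4 statements merged into one kernel-verified Lean document; each statement's English description precedes it below -/
import Mathlib

section
/- Let F : ℂ^l → ℂ be real-differentiable, let σ_1, …, σ_l be real numbers, and suppose Re F(e^{iσ_1 θ/2} z_1, …, e^{iσ_l θ/2} z_l) = Re F(z) for all θ ∈ ℝ and z ∈ ℂ^l. Define f_k(z) = ∂F/∂z̄_k(z) + conj(∂F/∂z_k(z)). Then f_k(e^{iσ_1 θ/2} z_1, …, e^{iσ_l θ/2} z_l) = e^{iσ_k θ/2} f_k(z) for all θ ∈ ℝ, z ∈ ℂ^l, and each k. -/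
open Finset

/-- Wirtinger derivative ∂/∂z_m of F : ℂ^l → ℂ at z (real Fréchet derivative version). -/
noncomputable def wirt {l : ℕ} (F : (Fin l → ℂ) → ℂ) (m : Fin l) (z : Fin l → ℂ) : ℂ :=
  (1 / 2 : ℂ) * (fderiv ℝ F z (Pi.single m 1) - Complex.I * fderiv ℝ F z (Pi.single m Complex.I))

/-- Wirtinger derivative ∂/∂z̄_m of F : ℂ^l → ℂ at z. -/
noncomputable def wirtBar {l : ℕ} (F : (Fin l → ℂ) → ℂ) (m : Fin l) (z : Fin l → ℂ) : ℂ :=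
  (1 / 2 : ℂ) * (fderiv ℝ F z (Pi.single m 1) + Complex.I * fderiv ℝ F z (Pi.single m Complex.I))

/-- The nonlinearity associated to the potential F. -/
noncomputable def nonlin {l : ℕ} (F : (Fin l → ℂ) → ℂ) (k : Fin l) (z : Fin l → ℂ) : ℂ :=
  wirtBar F k z + starRingEnd ℂ (wirt F k z)

/-- Gauge invariance of the nonlinearities derived from a gauge invariant potential. -/
theorem stmt2 (l : ℕ) (F : (Fin l → ℂ) → ℂ) (hF : Differentiable ℝ F) (σ : Fin l → ℝ)
    (hgauge : ∀ (θ : ℝ) (z : Fin l → ℂ),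
      (F (fun j => Complex.exp (Complex.I * (σ j) * θ / 2) * z j)).re = (F z).re)
    (θ : ℝ) (z : Fin l → ℂ) (k : Fin l) :
    nonlin F k (fun j => Complex.exp (Complex.I * (σ j) * θ / 2) * z j) =
      Complex.exp (Complex.I * (σ k) * θ / 2) * nonlin F k z := by
  classical
  set e : Fin l → ℂ := fun j => Complex.exp (Complex.I * (σ j) * θ / 2) with he
  set T : (Fin l → ℂ) →L[ℝ] (Fin l → ℂ) :=
    ContinuousLinearMap.pi (fun j => (e j) • (ContinuousLinearMap.proj j : (Fin l → ℂ) →L[ℝ] ℂ)) with hTdef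
  have hT : ∀ v : Fin l → ℂ, T v = fun j => e j * v j := by
    intro v; funext j
    simp [hTdef, smul_eq_mul]
  have hre : ∀ w, HasFDerivAt (fun y => (F y).re) ((Complex.reCLM : ℂ →L[ℝ] ℝ).comp (fderiv ℝ F w)) w :=
    fun w => (Complex.reCLM.hasFDerivAt).comp w (hF w).hasFDerivAt
  have hfun : (fun y => (F (T y)).re) = fun y => (F y).re := by
    funext w
    rw [hT w]
    exact hgauge θ w
  have hkey : ∀ v, (fderiv ℝ F (T z) (T v)).re = (fderiv ℝ F z v).re := by
    intro v
    have h1 : HasFDerivAt (fun y => (F (T y)).re)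
        (((Complex.reCLM : ℂ →L[ℝ] ℝ).comp (fderiv ℝ F (T z))).comp T) z :=
      (hre (T z)).comp z T.hasFDerivAt
    rw [hfun] at h1
    have h2 := h1.unique (hre z)
    have h3 := congrArg (fun (L : (Fin l → ℂ) →L[ℝ] ℝ) => L v) h2
    simpa using h3
  have hunit : e k * (starRingEnd ℂ) (e k) = 1 := by
    have hc : (starRingEnd ℂ) (e k) = Complex.exp (-(Complex.I * (σ k) * θ / 2)) := by
      rw [he, ← Complex.exp_conj]
      congr 1
      simp only [map_div₀, map_mul, Complex.conj_I, Complex.conj_ofReal, map_ofNat]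
      ring
    rw [hc, ← Complex.exp_add]
    simp
  have hsingle : ∀ c : ℂ, T (Pi.single k c) = Pi.single k (e k * c) := by
    intro c
    rw [hT]
    funext j
    rcases eq_or_ne j k with h | h
    · subst h; simp
    · simp [Pi.single_eq_of_ne h]
  have hlin : ∀ (w : Fin l → ℂ) (c : ℂ),
      (fderiv ℝ F w (Pi.single k c)).re
        = c.re * (fderiv ℝ F w (Pi.single k 1)).re
          + c.im * (fderiv ℝ F w (Pi.single k Complex.I)).re := by
    intro w c
    have hc : (Pi.single k c : Fin l → ℂ)
        = c.re • (Pi.single k (1:ℂ) : Fin l → ℂ) + c.im • (Pi.single k Complex.I : Fin l → ℂ) := by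
      funext j
      rcases eq_or_ne j k with h | h
      · subst h
        simp [Complex.real_smul]
      · simp [Pi.single_eq_of_ne h]
    rw [hc, map_add, map_smul, map_smul]
    simp [Complex.real_smul, Complex.add_re, Complex.mul_re]
  have hnon : ∀ w, nonlin F k w
      = ((fderiv ℝ F w (Pi.single k 1)).re : ℂ)
        + Complex.I * ((fderiv ℝ F w (Pi.single k Complex.I)).re : ℂ) := by
    intro w
    simp only [nonlin, wirt, wirtBar]
    apply Complex.ext <;>
      simp [Complex.ext_iff, Complex.mul_re, Complex.mul_im, Complex.add_re, Complex.add_im] <;>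
      ring
  have h1 : (fderiv ℝ F (T z) (Pi.single k 1)).re
      = (e k).re * (fderiv ℝ F z (Pi.single k 1)).re
        - (e k).im * (fderiv ℝ F z (Pi.single k Complex.I)).re := by
    have h := hkey (Pi.single k ((starRingEnd ℂ) (e k)))
    rw [hsingle, hunit, hlin z] at h
    rw [h]
    simp only [Complex.conj_re, Complex.conj_im]
    ring
  have h2 : (fderiv ℝ F (T z) (Pi.single k Complex.I)).re
      = (e k).im * (fderiv ℝ F z (Pi.single k 1)).re
        + (e k).re * (fderiv ℝ F z (Pi.single k Complex.I)).re := by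
    have h := hkey (Pi.single k ((starRingEnd ℂ) (e k) * Complex.I))
    rw [hsingle, ← mul_assoc, hunit, one_mul, hlin z] at h
    rw [h]
    simp only [Complex.mul_re, Complex.mul_im, Complex.conj_re, Complex.conj_im,
      Complex.I_re, Complex.I_im]
    ring
  have hTz : (fun j => Complex.exp (Complex.I * (σ j) * θ / 2) * z j) = T z := by
    rw [hT]
  rw [hTz, hnon (T z), hnon z, h1, h2]
  apply Complex.ext <;>
    simp [Complex.mul_re, Complex.mul_im, Complex.add_re, Complex.add_im] <;>
    ring
end

section
/- Let F : ℂ^l → ℂ be real-differentiable with f_k(z) = ∂F/∂z̄_k(z) + conj(∂F/∂z_k(z)), and suppose Re F(e^{iσ_1 θ/2} z_1, …, e^{iσ_l θ/2} z_l) = Re F(z) for all real θ and all z ∈ ℂ^l, where σ_k = α_k/γ_k with α_k, γ_k > 0. Then for all z ∈ ℂ^l, Im ∑_{k=1}^l (α_k/γ_k) f_k(z) · conj(z_k) = 0. -/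
open Finset

/-- Action of the real Fréchet derivative on a single coordinate, via Wirtinger derivatives. -/
lemma fderiv_single_eq {l : ℕ} (F : (Fin l → ℂ) → ℂ) (z : Fin l → ℂ) (k : Fin l) (c : ℂ) :
    fderiv ℝ F z (Pi.single k c) = wirt F k z * c + wirtBar F k z * starRingEnd ℂ c := by
  have hdecomp : Pi.single k c = c.re • (Pi.single k (1:ℂ) : Fin l → ℂ) + c.im • (Pi.single k Complex.I : Fin l → ℂ) := by
    funext j
    by_cases h : j = k
    · subst h; simp [Complex.ext_iff]
    · simp [Pi.single_eq_of_ne h]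
  rw [hdecomp, map_add, map_smul, map_smul]
  simp only [wirt, wirtBar, Complex.real_smul]
  apply Complex.ext <;>
    simp [Complex.mul_re, Complex.mul_im, Complex.conj_re, Complex.conj_im] <;> ring

/-- The key algebraic identity underlying mass conservation:
    Im ∑ (α_k/γ_k) f_k(z) conj(z_k) = 0 for gauge invariant F with σ_k = α_k/γ_k. -/
theorem stmt3 (l : ℕ) (F : (Fin l → ℂ) → ℂ) (hF : Differentiable ℝ F)
    (α γ : Fin l → ℝ) (hα : ∀ k, 0 < α k) (hγ : ∀ k, 0 < γ k)
    (hgauge : ∀ (θ : ℝ) (z : Fin l → ℂ),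
      (F (fun j => Complex.exp (Complex.I * (α j / γ j) * θ / 2) * z j)).re = (F z).re)
    (z : Fin l → ℂ) :
    (∑ k, ((α k / γ k : ℝ) : ℂ) * nonlin F k z * starRingEnd ℂ (z k)).im = 0 := by
  set σ : Fin l → ℝ := fun k => α k / γ k with hσ
  set w : Fin l → ℂ := fun j => Complex.I * (σ j) / 2 * z j with hw
  have hφ : HasDerivAt
      (fun θ : ℝ => (fun j => Complex.exp (Complex.I * (σ j) * θ / 2) * z j : Fin l → ℂ)) w 0 := by
    apply hasDerivAt_pi.2
    intro j
    have h1 : HasDerivAt (fun u : ℂ => Complex.exp (Complex.I * σ j * u / 2) * z j)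
        (Complex.I * σ j / 2 * z j) 0 := by
      have := ((((hasDerivAt_id (0:ℂ)).const_mul (Complex.I * σ j)).div_const 2).cexp).mul_const (z j)
      simpa using this
    have := h1.comp_ofReal (z := 0)
    simpa using this
  have hφ0 : (fun j => Complex.exp (Complex.I * σ j * ((0:ℝ):ℂ) / 2) * z j) = z := by
    funext j; simp
  have hFz : HasFDerivAt F (fderiv ℝ F z)
      (fun j => Complex.exp (Complex.I * σ j * ((0:ℝ):ℂ) / 2) * z j) := by
    rw [hφ0]; exact (hF z).hasFDerivAt
  have hcomp : HasDerivAt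
      (fun θ : ℝ => F (fun j => Complex.exp (Complex.I * σ j * θ / 2) * z j))
      (fderiv ℝ F z w) 0 := hFz.comp_hasDerivAt 0 hφ
  have hre : HasDerivAt
      (fun θ : ℝ => (F (fun j => Complex.exp (Complex.I * σ j * θ / 2) * z j)).re)
      ((fderiv ℝ F z w).re) 0 := Complex.reCLM.hasFDerivAt.comp_hasDerivAt 0 hcomp
  have hconst : (fun θ : ℝ => (F (fun j => Complex.exp (Complex.I * σ j * θ / 2) * z j)).re)
      = fun _ => (F z).re := funext fun θ => by
    have := hgauge θ z
    simp only [hσ, Complex.ofReal_div] at this ⊢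
    exact this
  rw [hconst] at hre
  have key : (fderiv ℝ F z w).re = 0 := hre.unique (hasDerivAt_const 0 _)
  have hLw : fderiv ℝ F z w
      = ∑ k, (wirt F k z * w k + wirtBar F k z * starRingEnd ℂ (w k)) := by
    conv_lhs => rw [← Finset.univ_sum_single w]
    rw [map_sum]
    exact Finset.sum_congr rfl fun k _ => fderiv_single_eq F z k (w k)
  rw [hLw, Complex.re_sum] at key
  have hmain : (∑ k, ((σ k : ℝ) : ℂ) * nonlin F k z * starRingEnd ℂ (z k)).im
      = 2 * ∑ k, (wirt F k z * w k + wirtBar F k z * starRingEnd ℂ (w k)).re := by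
    rw [Complex.im_sum, Finset.mul_sum]
    apply Finset.sum_congr rfl
    intro k _
    simp only [nonlin, hw, map_mul, map_div₀, Complex.conj_I, map_ofNat, Complex.conj_conj,
      Complex.conj_ofReal]
    simp [Complex.mul_re, Complex.mul_im, Complex.add_re, Complex.add_im,
      Complex.conj_re, Complex.conj_im]
    ring
  rw [hmain, key, mul_zero]
end

section
/- Let a ∈ ℝ, b > 0, q > 1 and set γ = (bq)^{−1/(q−1)}. Define f(r) = a − r + b r^q for r ≥ 0. Let I ⊂ ℝ be an interval containing 0 and G : I → [0,∞) continuous with f(G(t)) ≥ 0 for all t ∈ I. Assume a < (1−δ)(1 − 1/q)γ for some δ > 0 sufficiently small. Then: (i) if G(0) < γ there exists δ₁ = δ₁(δ) > 0 with G(t) < (1−δ₁)γ for all t ∈ I; (ii) if G(0) > γ there exists δ₂ = δ₂(δ) > 0 with G(t) > (1+δ₂)γ for all t ∈ I. -/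
/-- Trapping lemma: if f(r) = a - r + b r^q with f(G(t)) ≥ 0 on an interval I ∋ 0 and
a < (1-δ)(1-1/q)γ with γ = (bq)^{-1/(q-1)}, then G stays uniformly on one side of γ. -/
theorem stmt6 (a b q δ γ : ℝ) (hb : 0 < b) (hq : 1 < q) (hδ : 0 < δ) (hδ1 : δ < 1)
    (hγ : γ = (b * q) ^ (-(1 : ℝ) / (q - 1)))
    (I : Set ℝ) (hI : Convex ℝ I) (h0I : (0 : ℝ) ∈ I)
    (G : ℝ → ℝ) (hGc : ContinuousOn G I) (hGnn : ∀ t ∈ I, 0 ≤ G t)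
    (hfG : ∀ t ∈ I, 0 ≤ a - G t + b * (G t) ^ q)
    (ha : a < (1 - δ) * (1 - 1 / q) * γ) :
    ((G 0 < γ) → ∃ δ₁ > 0, ∀ t ∈ I, G t < (1 - δ₁) * γ) ∧
    ((G 0 > γ) → ∃ δ₂ > 0, ∀ t ∈ I, G t > (1 + δ₂) * γ) := by
  have hq0 : (0 : ℝ) < q := lt_trans one_pos hq
  have hc : 0 < b * q := mul_pos hb hq0
  have hγpos : 0 < γ := hγ ▸ Real.rpow_pos_of_pos hc _
  set F : ℝ → ℝ := fun r => a - r + b * r ^ q with hF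
  -- key: b * γ ^ q = γ / q
  have hkey : b * γ ^ q = γ / q := by
    have hq1 : q - 1 ≠ 0 := by linarith
    have h1 : γ ^ q = (b * q) ^ ((-(1 : ℝ) / (q - 1)) * q) := by
      rw [hγ, ← Real.rpow_mul hc.le]
    have h2 : (1 : ℝ) + (-(1 : ℝ) / (q - 1)) * q = -(1 : ℝ) / (q - 1) := by
      field_simp
      ring
    have hne : (1 : ℝ) + -1 / (q - 1) * q ≠ 0 := by
      rw [h2]; exact div_ne_zero (by norm_num) hq1
    have h3 : b * q * γ ^ q = γ := by
      rw [h1, hγ, ← Real.rpow_one_add' hc.le hne, h2]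
    rw [eq_div_iff (ne_of_gt hq0)]
    nlinarith [h3]
  -- F γ < 0
  have hFγ : F γ < 0 := by
    have hq1 : 1 - 1 / q > 0 := by
      have : 1 / q < 1 := by rw [div_lt_one hq0]; exact hq
      linarith
    have h1 : (1 - 1 / q) * γ > 0 := by positivity
    have h2 : a < (1 - 1 / q) * γ := by nlinarith
    have h3 : γ / q = (1 / q) * γ := by ring
    simp only [hF, hkey]
    nlinarith
  -- continuity of F at γ
  have hFc : ContinuousAt F γ := by
    have hr : ContinuousAt (fun r : ℝ => r ^ q) γ :=
      (Real.continuousAt_rpow_const γ q (Or.inl (ne_of_gt hγpos)))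
    exact ((continuousAt_const.sub continuousAt_id).add (continuousAt_const.mul hr))
  have hev : ∀ᶠ r in nhds γ, F r < 0 := hFc (Iio_mem_nhds hFγ)
  rw [Metric.eventually_nhds_iff] at hev
  obtain ⟨ε, hε, hball⟩ := hev
  have hball' : ∀ r : ℝ, |r - γ| < ε → F r < 0 := by
    intro r hr; exact hball (by rwa [Real.dist_eq])
  -- G never enters the ball
  have hGout : ∀ t ∈ I, ε ≤ |G t - γ| := by
    intro t ht
    by_contra h
    push_neg at h
    exact absurd (hfG t ht) (not_le.mpr (hball' _ h))
  have hord : (G '' I).OrdConnected := (hI.isPreconnected.image G hGc).ordConnected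
  have hγnot : γ ∉ G '' I := by
    rintro ⟨s, hs, hGs⟩
    have h := hGout s hs
    rw [hGs, sub_self, abs_zero] at h
    linarith
  have hγne : γ ≠ 0 := ne_of_gt hγpos
  constructor
  · intro hG0
    refine ⟨ε / (2 * γ), by positivity, ?_⟩
    intro t ht
    have h0 : G 0 ≤ γ - ε := by
      have h := hGout 0 h0I
      rw [abs_sub_comm, abs_of_pos (by linarith)] at h
      linarith
    have hlt : G t ≤ γ - ε := by
      by_contra h
      push_neg at h
      have hge : γ + ε ≤ G t := by
        have habs := hGout t ht
        rcases le_or_gt (G t) γ with h' | h'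
        · rw [abs_sub_comm, abs_of_nonneg (by linarith)] at habs; linarith
        · rw [abs_of_pos (by linarith)] at habs; linarith
      have : γ ∈ G '' I :=
        hord.out ⟨0, h0I, rfl⟩ ⟨t, ht, rfl⟩ ⟨by linarith, by linarith⟩
      exact hγnot this
    have heq : (1 - ε / (2 * γ)) * γ = γ - ε / 2 := by field_simp
    rw [heq]
    linarith
  · intro hG0
    refine ⟨ε / (2 * γ), by positivity, ?_⟩
    intro t ht
    have h0 : γ + ε ≤ G 0 := by
      have h := hGout 0 h0I
      rw [abs_of_pos (by linarith)] at h
      linarith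
    have hlt : γ + ε ≤ G t := by
      by_contra h
      push_neg at h
      have hge : G t ≤ γ - ε := by
        have habs := hGout t ht
        rcases le_or_gt (G t) γ with h' | h'
        · rw [abs_sub_comm, abs_of_nonneg (by linarith)] at habs; linarith
        · rw [abs_of_pos (by linarith)] at habs; linarith
      have : γ ∈ G '' I :=
        hord.out ⟨t, ht, rfl⟩ ⟨0, h0I, rfl⟩ ⟨by linarith, by linarith⟩
      exact hγnot this
    have heq : (1 + ε / (2 * γ)) * γ = γ + ε / 2 := by field_simp
    rw [heq]
    linarith
end

section
/- Let (ν_m) be a sequence of Borel probability measures on ℝ^d. Then there is a subsequence satisfying one of the following: (i) vanishing: for all R > 0, lim_m sup_{x∈ℝ^d} ν_m(B(x,R)) = 0; (ii) dichotomy: there exists λ ∈ (0,1) such that for all ε > 0 there exist R > 0 and a sequence (x_m) with, for every R' > R and all sufficiently large m, ν_m(B(x_m,R)) ≥ λ − ε and ν_m(ℝ^d \ B(x_m,R')) ≥ 1 − λ − ε; (iii) compactness: there exists a sequence (x_m) ⊂ ℝ^d such that for every ε > 0 there is R > 0 with ν_m(B(x_m,R)) ≥ 1 − ε for all m. -/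
open MeasureTheory Filter Metric Topology ENNReal

namespace CC12

variable {d : ℕ}

local notation "E" => EuclideanSpace ℝ (Fin d)

noncomputable def Q (ν : ℕ → Measure (EuclideanSpace ℝ (Fin d))) (m : ℕ) (R : ℝ) : ℝ :=
  ⨆ x : EuclideanSpace ℝ (Fin d), (ν m (Metric.ball x R)).toReal

lemma toReal_le_one (μ : Measure (EuclideanSpace ℝ (Fin d))) [IsProbabilityMeasure μ]
    (s : Set (EuclideanSpace ℝ (Fin d))) : (μ s).toReal ≤ 1 := by
  have h : μ s ≤ 1 := prob_le_one
  simpa using ENNReal.toReal_mono one_ne_top h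

lemma bddQ (ν : ℕ → Measure (EuclideanSpace ℝ (Fin d))) (hν : ∀ m, IsProbabilityMeasure (ν m))
    (m : ℕ) (R : ℝ) :
    BddAbove (Set.range fun x : E => (ν m (Metric.ball x R)).toReal) := by
  haveI := hν m
  exact ⟨1, by rintro r ⟨x, rfl⟩; exact toReal_le_one _ _⟩

lemma Q_nonneg (ν : ℕ → Measure (EuclideanSpace ℝ (Fin d))) (m : ℕ) (R : ℝ) : 0 ≤ Q ν m R :=
  Real.iSup_nonneg fun _ => ENNReal.toReal_nonneg

lemma Q_le_one (ν : ℕ → Measure (EuclideanSpace ℝ (Fin d))) (hν : ∀ m, IsProbabilityMeasure (ν m))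
    (m : ℕ) (R : ℝ) : Q ν m R ≤ 1 := by
  haveI := hν m
  exact Real.iSup_le (fun x => toReal_le_one _ _) zero_le_one

lemma le_Q (ν : ℕ → Measure (EuclideanSpace ℝ (Fin d))) (hν : ∀ m, IsProbabilityMeasure (ν m))
    (m : ℕ) (R : ℝ) (x : E) : (ν m (Metric.ball x R)).toReal ≤ Q ν m R :=
  le_ciSup (bddQ ν hν m R) x

lemma Q_mono (ν : ℕ → Measure (EuclideanSpace ℝ (Fin d))) (hν : ∀ m, IsProbabilityMeasure (ν m))
    (m : ℕ) {R R' : ℝ} (h : R ≤ R') : Q ν m R ≤ Q ν m R' := by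
  haveI := hν m
  refine ciSup_mono (bddQ ν hν m R') fun x => ?_
  exact ENNReal.toReal_mono (measure_ne_top _ _) (measure_mono (Metric.ball_subset_ball h))

lemma helly (ν : ℕ → Measure (EuclideanSpace ℝ (Fin d)))
    (hν : ∀ m, IsProbabilityMeasure (ν m)) :
    ∃ φ : ℕ → ℕ, StrictMono φ ∧ ∃ g : ℚ → ℝ, (∀ q, g q ∈ Set.Icc (0:ℝ) 1) ∧
      ∀ q : ℚ, Tendsto (fun m => Q ν (φ m) (q : ℝ)) atTop (𝓝 (g q)) := by
  set f : ℕ → (ℚ → ℝ) := fun m q => Q ν m (q : ℝ) with hf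
  have hcomp : IsCompact (Set.pi Set.univ fun _ : ℚ => Set.Icc (0:ℝ) 1) :=
    isCompact_univ_pi fun _ => isCompact_Icc
  have hmem : ∀ m, f m ∈ Set.pi Set.univ fun _ : ℚ => Set.Icc (0:ℝ) 1 := by
    intro m q _
    exact ⟨Q_nonneg ν m q, Q_le_one ν hν m q⟩
  obtain ⟨g, hg, φ, hφ, hconv⟩ := hcomp.tendsto_subseq hmem
  refine ⟨φ, hφ, g, fun q => hg q (Set.mem_univ q), fun q => ?_⟩
  exact (tendsto_pi_nhds.mp hconv) q

lemma compl_toReal (μ : Measure (EuclideanSpace ℝ (Fin d))) [IsProbabilityMeasure μ]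
    {s : Set (EuclideanSpace ℝ (Fin d))} (hs : MeasurableSet s) :
    (μ sᶜ).toReal = 1 - (μ s).toReal := by
  have h : μ s + μ sᶜ = 1 := by rw [measure_add_measure_compl hs, measure_univ]
  have h2 : (μ s).toReal + (μ sᶜ).toReal = 1 := by
    rw [← ENNReal.toReal_add (measure_ne_top _ _) (measure_ne_top _ _), h, ENNReal.toReal_one]
  linarith

lemma tight (μ : Measure (EuclideanSpace ℝ (Fin d))) [IsProbabilityMeasure μ]
    (c : EuclideanSpace ℝ (Fin d)) {ε : ℝ} (hε : 0 < ε) :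
    ∃ R > (0:ℝ), 1 - ε ≤ (μ (Metric.ball c R)).toReal := by
  have hmono : Monotone fun n : ℕ => Metric.ball c (n : ℝ) := fun a b hab =>
    Metric.ball_subset_ball (by exact_mod_cast hab)
  have h1 : Tendsto (fun n : ℕ => μ (Metric.ball c (n : ℝ))) atTop (𝓝 (μ Set.univ)) := by
    have := tendsto_measure_iUnion_atTop (μ := μ) hmono
    rwa [Metric.iUnion_ball_nat] at this
  rw [measure_univ] at h1
  have h2 : Tendsto (fun n : ℕ => (μ (Metric.ball c (n : ℝ))).toReal) atTop (𝓝 1) := by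
    have := (ENNReal.tendsto_toReal one_ne_top).comp h1
    simpa [Function.comp_def] using this
  have h3 : ∀ᶠ n : ℕ in atTop, 1 - ε < (μ (Metric.ball c (n : ℝ))).toReal :=
    h2.eventually (eventually_gt_nhds (by linarith))
  obtain ⟨n, hn⟩ := h3.exists
  refine ⟨(n : ℝ) + 1, by positivity, ?_⟩
  have h4 : (μ (Metric.ball c (n : ℝ))).toReal ≤ (μ (Metric.ball c ((n : ℝ) + 1))).toReal :=
    ENNReal.toReal_mono (measure_ne_top μ _)
      (measure_mono (Metric.ball_subset_ball (by linarith)))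
  linarith

lemma prefix_bound (ν : ℕ → Measure (EuclideanSpace ℝ (Fin d)))
    (hν : ∀ m, IsProbabilityMeasure (ν m)) (x : ℕ → EuclideanSpace ℝ (Fin d))
    {ε : ℝ} (hε : 0 < ε) (M : ℕ) :
    ∃ R > (0:ℝ), ∀ m < M, 1 - ε ≤ (ν m (Metric.ball (x m) R)).toReal := by
  induction M with
  | zero => exact ⟨1, one_pos, by omega⟩
  | succ M ih =>
    obtain ⟨R, hRpos, hR⟩ := ih
    haveI := hν M
    obtain ⟨R', hR'pos, hR'⟩ := tight (ν M) (x M) hε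
    refine ⟨max R R', lt_max_of_lt_left hRpos, fun m hm => ?_⟩
    rcases Nat.lt_succ_iff_lt_or_eq.mp hm with h | rfl
    · haveI := hν m
      exact le_trans (hR m h) (ENNReal.toReal_mono (measure_ne_top _ _)
        (measure_mono (Metric.ball_subset_ball (le_max_left _ _))))
    · exact le_trans hR' (ENNReal.toReal_mono (measure_ne_top _ _)
        (measure_mono (Metric.ball_subset_ball (le_max_right _ _))))

end CC12

/-- Lions' first concentration-compactness lemma: any sequence of Borel probability
measures on ℝ^d has a subsequence which either vanishes, dichotomizes, or is compact. -/
theorem stmt12 (d : ℕ) (ν : ℕ → Measure (EuclideanSpace ℝ (Fin d)))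
    (hν : ∀ m, IsProbabilityMeasure (ν m)) :
    ∃ φ : ℕ → ℕ, StrictMono φ ∧
      ((∀ R > 0, Tendsto
          (fun m => ⨆ x : EuclideanSpace ℝ (Fin d), (ν (φ m) (Metric.ball x R)).toReal)
          atTop (nhds 0)) ∨
       (∃ lam : ℝ, 0 < lam ∧ lam < 1 ∧ ∀ ε > 0, ∃ R > 0,
          ∃ x : ℕ → EuclideanSpace ℝ (Fin d), ∀ R' > R, ∃ M : ℕ, ∀ m ≥ M,
            (ν (φ m) (Metric.ball (x m) R)).toReal ≥ lam - ε ∧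
            (ν (φ m) ((Metric.ball (x m) R')ᶜ)).toReal ≥ 1 - lam - ε) ∨
       (∃ x : ℕ → EuclideanSpace ℝ (Fin d), ∀ ε > 0, ∃ R > 0, ∀ m,
          (ν (φ m) (Metric.ball (x m) R)).toReal ≥ 1 - ε)) := by
  classical
  obtain ⟨φ, hφ, g, hg, hconv⟩ := CC12.helly ν hν
  refine ⟨φ, hφ, ?_⟩
  have hgbdd : BddAbove (Set.range g) := ⟨1, by rintro r ⟨q, rfl⟩; exact (hg q).2⟩
  set lam : ℝ := ⨆ q : ℚ, g q with hlam
  have hglam : ∀ q, g q ≤ lam := fun q => le_ciSup hgbdd q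
  have lam_le_one : lam ≤ 1 := ciSup_le fun q => (hg q).2
  have hQle : ∀ m (R : ℝ) (x : EuclideanSpace ℝ (Fin d)),
      (ν m (Metric.ball x R)).toReal ≤ CC12.Q ν m R := CC12.le_Q ν hν
  rcases lt_or_ge 0 lam with hpos | hzero
  · rcases lt_or_ge lam 1 with hlt | hge
    · -- dichotomy
      refine Or.inr (Or.inl ⟨lam, hpos, hlt, ?_⟩)
      intro ε hε
      obtain ⟨q, hq⟩ := exists_lt_of_lt_ciSup (show lam - ε/2 < lam by linarith)
      have hx : ∀ m, ∃ x : EuclideanSpace ℝ (Fin d),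
          CC12.Q ν (φ m) (q : ℝ) - ε/4 < (ν (φ m) (Metric.ball x (q : ℝ))).toReal := by
        intro m
        exact exists_lt_of_lt_ciSup (sub_lt_self _ (by positivity))
      choose x hxx using hx
      refine ⟨max (q : ℝ) 1, lt_max_of_lt_right one_pos, x, ?_⟩
      intro R' hR'
      obtain ⟨q', hq'⟩ := exists_rat_gt R'
      have e1 : ∀ᶠ m in atTop, g q - ε/4 < CC12.Q ν (φ m) (q : ℝ) :=
        (hconv q).eventually (eventually_gt_nhds (by linarith))
      have e2 : ∀ᶠ m in atTop, CC12.Q ν (φ m) (q' : ℝ) < lam + ε :=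
        (hconv q').eventually (eventually_lt_nhds (lt_of_le_of_lt (hglam q') (by linarith)))
      obtain ⟨M, hM⟩ := eventually_atTop.mp (e1.and e2)
      refine ⟨M, fun m hm => ?_⟩
      obtain ⟨hM1, hM2⟩ := hM m hm
      haveI := hν (φ m)
      have hb1 : (ν (φ m) (Metric.ball (x m) (q : ℝ))).toReal ≤
          (ν (φ m) (Metric.ball (x m) (max (q : ℝ) 1))).toReal :=
        ENNReal.toReal_mono (measure_ne_top _ _)
          (measure_mono (Metric.ball_subset_ball (le_max_left _ _)))
      have hb2 : (ν (φ m) (Metric.ball (x m) R')).toReal ≤ CC12.Q ν (φ m) (q' : ℝ) :=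
        le_trans (ENNReal.toReal_mono (measure_ne_top _ _)
          (measure_mono (Metric.ball_subset_ball hq'.le))) (hQle (φ m) _ (x m))
      have hcompl : (ν (φ m) ((Metric.ball (x m) R')ᶜ)).toReal =
          1 - (ν (φ m) (Metric.ball (x m) R')).toReal :=
        CC12.compl_toReal _ measurableSet_ball
      constructor
      · have := hxx m
        linarith
      · rw [hcompl]; linarith
    · -- compactness
      have hlam1 : lam = 1 := le_antisymm lam_le_one hge
      obtain ⟨q₀, hq₀⟩ := exists_lt_of_lt_ciSup (show (3/4 : ℝ) < lam by rw [hlam1]; norm_num)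
      have hy : ∀ m, ∃ x : EuclideanSpace ℝ (Fin d),
          CC12.Q ν (φ m) (q₀ : ℝ) - 1/8 < (ν (φ m) (Metric.ball x (q₀ : ℝ))).toReal :=
        fun m => exists_lt_of_lt_ciSup (sub_lt_self _ (by norm_num))
      choose y hyy using hy
      refine Or.inr (Or.inr ⟨y, ?_⟩)
      intro ε hε
      set ε' : ℝ := min ε (1/4) with hε'def
      have hε'pos : 0 < ε' := lt_min hε (by norm_num)
      have hε'le : ε' ≤ 1/4 := min_le_right _ _
      have hε'ε : ε' ≤ ε := min_le_left _ _
      obtain ⟨q₁, hq₁⟩ := exists_lt_of_lt_ciSup (show 1 - ε'/4 < lam by rw [hlam1]; linarith)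
      have hz : ∀ m, ∃ x : EuclideanSpace ℝ (Fin d),
          CC12.Q ν (φ m) (q₁ : ℝ) - ε'/2 < (ν (φ m) (Metric.ball x (q₁ : ℝ))).toReal :=
        fun m => exists_lt_of_lt_ciSup (sub_lt_self _ (by positivity))
      choose z hzz using hz
      have e0 : ∀ᶠ m in atTop, (5/8 : ℝ) < CC12.Q ν (φ m) (q₀ : ℝ) :=
        (hconv q₀).eventually (eventually_gt_nhds (by linarith))
      have e1 : ∀ᶠ m in atTop, 1 - ε'/2 < CC12.Q ν (φ m) (q₁ : ℝ) :=
        (hconv q₁).eventually (eventually_gt_nhds (by linarith))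
      obtain ⟨M, hM⟩ := eventually_atTop.mp (e0.and e1)
      obtain ⟨R₀, hR₀pos, hR₀⟩ := CC12.prefix_bound (fun m => ν (φ m))
        (fun m => hν (φ m)) y hε'pos M
      refine ⟨max R₀ ((q₀ : ℝ) + 2 * (q₁ : ℝ)), lt_max_of_lt_left hR₀pos, ?_⟩
      intro m
      haveI := hν (φ m)
      rcases lt_or_ge m M with hmM | hmM
      · have := hR₀ m hmM
        have hmono : (ν (φ m) (Metric.ball (y m) R₀)).toReal ≤
            (ν (φ m) (Metric.ball (y m) (max R₀ ((q₀ : ℝ) + 2 * (q₁ : ℝ))))).toReal :=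
          ENNReal.toReal_mono (measure_ne_top _ _)
            (measure_mono (Metric.ball_subset_ball (le_max_left _ _)))
        linarith
      · obtain ⟨hM0, hM1⟩ := hM m hmM
        have h₀ : (1/2 : ℝ) < (ν (φ m) (Metric.ball (y m) (q₀ : ℝ))).toReal := by
          have := hyy m; linarith
        have h₁ : 1 - ε' < (ν (φ m) (Metric.ball (z m) (q₁ : ℝ))).toReal := by
          have := hzz m; linarith
        -- the two balls intersect
        have hinter : ∃ p, p ∈ Metric.ball (y m) (q₀ : ℝ) ∩ Metric.ball (z m) (q₁ : ℝ) := by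
          by_contra hcon
          push_neg at hcon
          have hdisj : Disjoint (Metric.ball (y m) (q₀ : ℝ)) (Metric.ball (z m) (q₁ : ℝ)) :=
            Set.disjoint_left.mpr fun p hp hp' => hcon p ⟨hp, hp'⟩
          have hu : ν (φ m) (Metric.ball (y m) (q₀ : ℝ) ∪ Metric.ball (z m) (q₁ : ℝ)) =
              ν (φ m) (Metric.ball (y m) (q₀ : ℝ)) + ν (φ m) (Metric.ball (z m) (q₁ : ℝ)) :=
            measure_union hdisj measurableSet_ball
          have hle : (ν (φ m) (Metric.ball (y m) (q₀ : ℝ))).toReal +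
              (ν (φ m) (Metric.ball (z m) (q₁ : ℝ))).toReal ≤ 1 := by
            rw [← ENNReal.toReal_add (measure_ne_top _ _) (measure_ne_top _ _), ← hu]
            exact CC12.toReal_le_one _ _
          linarith
        obtain ⟨p, hp₀, hp₁⟩ := hinter
        have hdist : dist (z m) (y m) < (q₁ : ℝ) + (q₀ : ℝ) :=
          calc dist (z m) (y m) ≤ dist (z m) p + dist p (y m) := dist_triangle _ _ _
          _ < (q₁ : ℝ) + (q₀ : ℝ) := by
              have h1 := Metric.mem_ball.mp hp₀
              have h2 := Metric.mem_ball.mp hp₁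
              rw [dist_comm] at h2
              exact add_lt_add h2 h1
        have hsub : Metric.ball (z m) (q₁ : ℝ) ⊆ Metric.ball (y m) ((q₀ : ℝ) + 2 * (q₁ : ℝ)) := by
          intro w hw
          have hw' := Metric.mem_ball.mp hw
          have : dist w (y m) ≤ dist w (z m) + dist (z m) (y m) := dist_triangle _ _ _
          exact Metric.mem_ball.mpr (by linarith)
        have hmono : (ν (φ m) (Metric.ball (z m) (q₁ : ℝ))).toReal ≤
            (ν (φ m) (Metric.ball (y m) (max R₀ ((q₀ : ℝ) + 2 * (q₁ : ℝ))))).toReal :=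
          ENNReal.toReal_mono (measure_ne_top _ _)
            (measure_mono (hsub.trans (Metric.ball_subset_ball (le_max_right _ _))))
        linarith
  · -- vanishing
    refine Or.inl ?_
    have hg0 : ∀ q, g q = 0 := fun q => le_antisymm ((hglam q).trans hzero) (hg q).1
    intro R hR
    obtain ⟨q, hq⟩ := exists_rat_gt R
    have hlim : Tendsto (fun m => CC12.Q ν (φ m) (q : ℝ)) atTop (𝓝 0) := by
      have := hconv q; rwa [hg0 q] at this
    exact squeeze_zero (fun m => CC12.Q_nonneg ν (φ m) R)
      (fun m => CC12.Q_mono ν hν (φ m) hq.le) hlim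
end
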